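/- If (RG)^- is anticommutative and the set G_* of *-fixed elements generates no nontrivial commutators (i.e., every pair of elements of G_* commutes), then G is abelian or G is an SLC-group with canonical involution *. -/

import Mathlib

open Finsupp
open scoped Classical commutatorElement

/-- The generalized oriented map σ* on the group ring RG. -/
noncomputable def sigmaStar {R : Type} [CommRing R] {G : Type} [Group G]
    (inv : G → G) (σ : G →* Rˣ) (α : MonoidAlgebra R G) : MonoidAlgebra R G :=
  MonoidAlgebra.ofCoeff (α.coeff.sum fun x a => Finsupp.single (inv x) ((σ x : R) * a))

/-- The set of skew-symmetric elements of RG under σ*. -/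
def skewSet {R : Type} [CommRing R] {G : Type} [Group G]
    (inv : G → G) (σ : G →* Rˣ) : Set (MonoidAlgebra R G) :=
  {α | sigmaStar inv σ α = -α}

/-- G is an LC-group: whenever two elements commute, one of x, y, xy is central. -/
def IsLCGroup (G : Type) [Group G] : Prop :=
  ∀ x y : G, x * y = y * x →
    x ∈ Subgroup.center G ∨ y ∈ Subgroup.center G ∨ x * y ∈ Subgroup.center G

/-- G is an SLC-group (nonabelian LC-group with a unique nontrivial commutator s)
and `inv` is its canonical involution. -/
def IsSLCWithCanonical (G : Type) [Group G] (inv : G → G) : Prop :=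
  (¬ ∀ a b : G, a * b = b * a) ∧ IsLCGroup G ∧
  ∃ s : G, s ≠ 1 ∧ (commutator G : Set G) = {1, s} ∧
    (∀ x : G, x ∈ Subgroup.center G → inv x = x) ∧
    (∀ x : G, x ∉ Subgroup.center G → inv x = s * x)

-- auxiliary lemmas
section
variable {R : Type} [CommRing R] {G : Type} [Group G] (inv : G → G) (σ : G →* Rˣ)

noncomputable def alpha' (g : G) : MonoidAlgebra R G :=
  MonoidAlgebra.single g 1 - MonoidAlgebra.single (inv g) ((σ g : Rˣ) : R)

lemma sigmaStar_single (x : G) (a : R) :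
    sigmaStar inv σ (MonoidAlgebra.single x a) = MonoidAlgebra.single (inv x) ((σ x : R) * a) := by
  unfold sigmaStar
  rw [MonoidAlgebra.coeff_single, Finsupp.sum_single_index, MonoidAlgebra.ofCoeff_single]
  simp

lemma sigmaStar_sub (f g : MonoidAlgebra R G) :
    sigmaStar inv σ (f - g) = sigmaStar inv σ f - sigmaStar inv σ g := by
  unfold sigmaStar
  rw [MonoidAlgebra.coeff_sub, Finsupp.sum_sub_index, MonoidAlgebra.ofCoeff_sub]
  intro a b₁ b₂
  simp [mul_sub, Finsupp.single_sub]

lemma alpha'_skew (hinv : ∀ x : G, inv (inv x) = x)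
    (hcompat : ∀ x : G, x * inv x ∈ σ.ker) (g : G) :
    alpha' inv σ g ∈ skewSet (R := R) inv σ := by
  have hker : ((σ g : Rˣ) : R) * ((σ (inv g) : Rˣ) : R) = 1 := by
    have h1 := hcompat g
    rw [MonoidHom.mem_ker] at h1
    have h2 : (σ g) * (σ (inv g)) = 1 := by rw [← map_mul]; exact h1
    have := congrArg (Units.val) h2
    push_cast at this
    exact this
  show sigmaStar inv σ _ = _
  unfold alpha'
  rw [sigmaStar_sub]
  show sigmaStar inv σ (MonoidAlgebra.single g 1) - sigmaStar inv σ (MonoidAlgebra.single (inv g) _) = _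
  rw [sigmaStar_single, sigmaStar_single, hinv g, mul_one]
  rw [show ((σ (inv g) : Rˣ) : R) * ((σ g : Rˣ) : R) = 1 by rw [mul_comm]; exact hker]
  abel

lemma alpha'_mul (g h : G) :
    (alpha' inv σ g) * (alpha' inv σ h) =
    MonoidAlgebra.single (g*h) (1:R) - MonoidAlgebra.single (g * inv h) ((σ h : R))
      - MonoidAlgebra.single (inv g * h) ((σ g : R))
      + MonoidAlgebra.single (inv g * inv h) ((σ g : R) * (σ h : R)) := by
  unfold alpha'
  rw [sub_mul, mul_sub, mul_sub]
  simp only [MonoidAlgebra.single_mul_single, one_mul, mul_one]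
  abel

lemma Ecoef (hinv : ∀ x : G, inv (inv x) = x)
    (hcompat : ∀ x : G, x * inv x ∈ σ.ker)
    (hanti : ∀ α ∈ skewSet (R := R) inv σ, ∀ β ∈ skewSet (R := R) inv σ, α * β + β * α = 0)
    (g h z : G) :
    (if g*h = z then (1:R) else 0) + (if h*g = z then (1:R) else 0)
    - ((if g * inv h = z then ((σ h : Rˣ):R) else 0) + (if inv h * g = z then ((σ h : Rˣ):R) else 0))
    - ((if inv g * h = z then ((σ g : Rˣ):R) else 0) + (if h * inv g = z then ((σ g : Rˣ):R) else 0))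
    + ((if inv g * inv h = z then ((σ g : Rˣ):R) * ((σ h : Rˣ):R) else 0)
       + (if inv h * inv g = z then ((σ g : Rˣ):R) * ((σ h : Rˣ):R) else 0)) = 0 := by
  have H := hanti _ (alpha'_skew inv σ hinv hcompat g) _ (alpha'_skew inv σ hinv hcompat h)
  rw [alpha'_mul, alpha'_mul] at H
  have H' : (Finsupp.single (g*h) (1:R) - Finsupp.single (g * inv h) ((σ h : Rˣ):R)
      - Finsupp.single (inv g * h) ((σ g : Rˣ):R)
      + Finsupp.single (inv g * inv h) (((σ g : Rˣ):R) * ((σ h : Rˣ):R))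
      + (Finsupp.single (h*g) (1:R) - Finsupp.single (h * inv g) ((σ g : Rˣ):R)
      - Finsupp.single (inv h * g) ((σ h : Rˣ):R)
      + Finsupp.single (inv h * inv g) (((σ h : Rˣ):R) * ((σ g : Rˣ):R)))) = (0 : G →₀ R) := congrArg MonoidAlgebra.coeff H
  have H2 := congrArg (fun f : G →₀ R => f z) H'
  simp only [Finsupp.add_apply, Finsupp.sub_apply, Finsupp.single_apply,
    Finsupp.coe_zero, Pi.zero_apply] at H2
  rw [show ((σ h : Rˣ):R) * ((σ g : Rˣ):R) = ((σ g : Rˣ):R) * ((σ h : Rˣ):R) from mul_comm _ _] at H2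
  linear_combination H2

end


set_option maxHeartbeats 2000000 in
theorem stmt13 {R : Type} [CommRing R] (hchar : ringChar R ≠ 2) {G : Type} [Group G]
    (inv : G → G) (hmul : ∀ x y : G, inv (x * y) = inv y * inv x)
    (hinv : ∀ x : G, inv (inv x) = x) (σ : G →* Rˣ) (hnt : σ ≠ 1)
    (hcompat : ∀ x : G, x * inv x ∈ σ.ker)
    (hanti : ∀ α ∈ skewSet inv σ, ∀ β ∈ skewSet inv σ, α * β + β * α = 0)
    (hfix : ∀ x y : G, inv x = x → inv y = y → x * y = y * x) :
    (∀ a b : G, a * b = b * a) ∨ IsSLCWithCanonical G inv := by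
  -- basic ring facts
  have hone : (1:R) ≠ 0 := by
    intro h
    apply hnt
    have hall : ∀ x y : R, x = y := by
      intro x y
      calc x = x * 1 := (mul_one x).symm
        _ = y * 1 := by rw [h, mul_zero, mul_zero]
        _ = y := mul_one y
    exact MonoidHom.ext fun g => Units.ext (hall _ _)
  have htwo : (2:R) ≠ 0 := by
    intro h2
    have hdvd : ringChar R ∣ 2 := (ringChar.spec R 2).mp (by exact_mod_cast h2)
    rcases (Nat.dvd_prime Nat.prime_two).mp hdvd with h | h
    · exact hone (by
        have := (ringChar.spec R 1).mpr (h ▸ dvd_refl _)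
        simpa using this)
    · exact hchar h
  have hcancel : ∀ (a : Rˣ) (x : R), (a:R) * x = 0 → x = 0 := by
    intro a x hx
    have := congrArg (fun t => ((a⁻¹ : Rˣ) : R) * t) hx
    simpa [← mul_assoc, Units.inv_mul] using this
  have E := Ecoef inv σ hinv hcompat hanti
  -- L1 : g * inv g = inv g * g for nonfixed g
  have L1 : ∀ g : G, inv g ≠ g → g * inv g = inv g * g := by
    intro g hg
    by_contra hc
    have E1 := E g g (g * inv g)
    rw [if_neg (fun e : g * g = g * inv g => hg (mul_left_cancel e).symm),
        if_pos (rfl : g * inv g = g * inv g),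
        if_neg (fun e : inv g * g = g * inv g => hc e.symm),
        if_neg (fun e : inv g * inv g = g * inv g => hg (mul_right_cancel e))] at E1
    have : ((σ g : Rˣ) : R) * 2 = 0 := by linear_combination -E1
    exact htwo (hcancel _ _ this)
  -- L2 : g * g = inv g * inv g for nonfixed g
  have L2 : ∀ g : G, inv g ≠ g → g * g = inv g * inv g := by
    intro g hg
    by_contra hsq
    have E1 := E g g (g * g)
    rw [if_pos (rfl : g * g = g * g),
        if_neg (fun e : g * inv g = g * g => hg (mul_left_cancel e)),
        if_neg (fun e : inv g * g = g * g => hg (mul_right_cancel e)),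
        if_neg (fun e : inv g * inv g = g * g => hsq e.symm)] at E1
    have : (2:R) = 0 := by linear_combination E1
    exact htwo this

  -- inv 1 = 1 and inv of inverses
  have inv1 : inv (1:G) = 1 := by
    have e := hmul 1 1
    rw [mul_one] at e
    have e2 : inv (1:G) * 1 = inv 1 * inv 1 := by rw [mul_one]; exact e
    exact (mul_left_cancel e2).symm
  have hinvinv : ∀ g : G, inv g⁻¹ = (inv g)⁻¹ := by
    intro g
    have e := hmul g⁻¹ g
    rw [inv_mul_cancel, inv1] at e
    exact (eq_inv_of_mul_eq_one_right e.symm)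
  have Pfacts : ∀ g : G, inv g ≠ g →
      (inv g = (inv g * g⁻¹) * g ∧ (inv g * g⁻¹) * (inv g * g⁻¹) = 1 ∧
       inv (inv g * g⁻¹) = inv g * g⁻¹ ∧ inv g * g⁻¹ ≠ 1 ∧
       (inv g * g⁻¹) * g = g * (inv g * g⁻¹)) := by
    intro g hg
    have hcm : g * inv g = inv g * g := L1 g hg
    have hsq : g * g = inv g * inv g := L2 g hg
    have e1 : g⁻¹ * inv g = inv g * g⁻¹ := by
      have h1 : Commute g (inv g) := hcm
      exact h1.inv_left.eq
    refine ⟨(inv_mul_cancel_right (inv g) g).symm, ?_, ?_, ?_, ?_⟩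
    · calc (inv g * g⁻¹) * (inv g * g⁻¹) = inv g * (g⁻¹ * inv g) * g⁻¹ := by group
        _ = inv g * (inv g * g⁻¹) * g⁻¹ := by rw [e1]
        _ = (inv g * inv g) * (g⁻¹ * g⁻¹) := by group
        _ = (g * g) * (g⁻¹ * g⁻¹) := by rw [← hsq]
        _ = 1 := by group
    · have h2 : inv (inv g * g⁻¹) = (inv g)⁻¹ * g := by
        rw [hmul, hinvinv, hinv]
      rw [h2]
      calc (inv g)⁻¹ * g = (inv g)⁻¹ * (g * g) * g⁻¹ := by group
        _ = (inv g)⁻¹ * (inv g * inv g) * g⁻¹ := by rw [hsq]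
        _ = inv g * g⁻¹ := by group
    · intro e
      exact hg (mul_inv_eq_one.mp e)
    · calc (inv g * g⁻¹) * g = inv g := inv_mul_cancel_right (inv g) g
        _ = g * (inv g * g⁻¹) := by rw [← mul_assoc, hcm, mul_inv_cancel_right]
  -- L3 : fixed elements are central
  have L3 : ∀ c g : G, inv c = c → c * g = g * c := by
    intro c g hc
    by_cases hgf : inv g = g
    · exact hfix c g hc hgf
    · by_contra hne
      obtain ⟨hinvg, hP2, hPf, hPn, hPc⟩ := Pfacts g hgf
      set p := inv g * g⁻¹ with hpdef
      have hpc : p * c = c * p := hfix p c hPf hc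
      have hg2f : inv (g*g) = g*g := by rw [hmul, ← L2 g hgf]
      have hg2c : (g*g) * c = c * (g*g) := hfix _ c hg2f hc
      have hcgne : inv (c*g) ≠ c*g := by
        intro e
        exact hne (mul_left_cancel ((hfix c (c*g) hc e).trans (mul_assoc c g c)))
      have hgcne : inv (g*c) ≠ g*c := by
        intro e
        have h2 := hfix (g*c) c e hc
        exact hne (mul_right_cancel (h2.trans (mul_assoc c g c).symm)).symm
      have hicg : inv (c*g) = p*g*c := by rw [hmul, hc, hinvg]
      have higc : inv (g*c) = c*(p*g) := by rw [hmul, hc, hinvg]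
      have hi : ¬ (p*g*c = c*g) := fun e => hcgne (hicg.trans e)
      have hii : ¬ (c*(p*g) = g*c) := fun e => hgcne (higc.trans e)
      have hpgpg : (p*g)*(p*g) = g*g := by
        calc (p*g)*(p*g) = p*((g*p)*g) := by group
          _ = p*((p*g)*g) := by rw [← hPc]
          _ = (p*p)*(g*g) := by group
          _ = g*g := by rw [hP2, one_mul]
      have hc8pos : (p*g*c)*(p*g) = g*(c*g) := by
        calc (p*g*c)*(p*g) = (p*g)*((c*p)*g) := by group
          _ = (p*g)*((p*c)*g) := by rw [← hpc]
          _ = p*((g*p)*(c*g)) := by group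
          _ = p*((p*g)*(c*g)) := by rw [← hPc]
          _ = (p*p)*(g*(c*g)) := by group
          _ = g*(c*g) := by rw [hP2, one_mul]
      -- first evaluation
      have E1 := E g (c*g) (g*(c*g))
      rw [hicg, hinvg] at E1
      rw [if_pos (rfl : g*(c*g) = g*(c*g)),
          if_neg (fun e : (c*g)*g = g*(c*g) =>
            hne (mul_right_cancel (e.trans (mul_assoc g c g).symm))),
          if_neg (fun e : g*(p*g*c) = g*(c*g) => hi (mul_left_cancel e)),
          if_neg (fun e : (p*g*c)*g = g*(c*g) => by
            apply hPn
            have e2 : p * (g*(c*g)) = g*(c*g) := by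
              calc p * (g*(c*g)) = (p*g*c)*g := by group
                _ = g*(c*g) := e
            exact mul_eq_right.mp e2),
          if_neg (fun e : (p*g)*(c*g) = g*(c*g) => by
            apply hPn
            have e2 : p * (g*(c*g)) = g*(c*g) := by
              calc p * (g*(c*g)) = (p*g)*(c*g) := by group
                _ = g*(c*g) := e
            exact mul_eq_right.mp e2),
          if_neg (fun e : (c*g)*(p*g) = g*(c*g) => by
            apply hii
            refine mul_right_cancel (b := g) ?_
            calc (c*(p*g))*g = c*((p*g)*g) := by group
              _ = c*((g*p)*g) := by rw [hPc]
              _ = (c*g)*(p*g) := by group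
              _ = g*(c*g) := e
              _ = (g*c)*g := by group),
          if_neg (fun e : (p*g)*(p*g*c) = g*(c*g) => by
            apply hne
            refine mul_right_cancel (b := g) ?_
            calc (c*g)*g = c*(g*g) := by group
              _ = (g*g)*c := hg2c.symm
              _ = ((p*g)*(p*g))*c := by rw [hpgpg]
              _ = (p*g)*(p*g*c) := by group
              _ = g*(c*g) := e
              _ = (g*c)*g := by group),
          if_pos hc8pos] at E1
      rw [map_mul, Units.val_mul] at E1
      have eq1 : 1 + ((σ g : Rˣ):R) * (((σ c : Rˣ):R) * ((σ g : Rˣ):R)) = 0 := by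
        linear_combination E1
      -- second evaluation
      have E2 := E g (c*g) (p*(g*(c*g)))
      rw [hicg, hinvg] at E2
      rw [if_neg (fun e : g*(c*g) = p*(g*(c*g)) => hPn (mul_eq_right.mp e.symm)),
          if_neg (fun e : (c*g)*g = p*(g*(c*g)) => by
            apply hii
            have e' : p * ((c*g)*g) = g*(c*g) := by
              rw [e, ← mul_assoc, hP2, one_mul]
            refine mul_right_cancel (b := g) ?_
            calc (c*(p*g))*g = ((c*p)*g)*g := by group
              _ = ((p*c)*g)*g := by rw [← hpc]
              _ = p*((c*g)*g) := by group
              _ = g*(c*g) := e'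
              _ = (g*c)*g := by group),
          if_neg (fun e : g*(p*g*c) = p*(g*(c*g)) => by
            apply hne
            have e1 : p*(g*(g*c)) = p*(g*(c*g)) := by
              calc p*(g*(g*c)) = (p*g)*(g*c) := by group
                _ = (g*p)*(g*c) := by rw [hPc]
                _ = g*(p*g*c) := by group
                _ = p*(g*(c*g)) := e
            exact (mul_left_cancel (mul_left_cancel e1)).symm),
          if_pos (show (p*g*c)*g = p*(g*(c*g)) by group),
          if_pos (show (p*g)*(c*g) = p*(g*(c*g)) by group),
          if_neg (fun e : (c*g)*(p*g) = p*(g*(c*g)) => by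
            apply hne
            have e1 : p*(c*(g*g)) = p*((g*c)*g) := by
              calc p*(c*(g*g)) = (p*c)*(g*g) := by group
                _ = (c*p)*(g*g) := by rw [hpc]
                _ = c*((p*g)*g) := by group
                _ = c*((g*p)*g) := by rw [hPc]
                _ = (c*g)*(p*g) := by group
                _ = p*(g*(c*g)) := e
                _ = p*((g*c)*g) := by group
            have e2 := mul_left_cancel e1
            refine mul_right_cancel (b := g) ?_
            calc (c*g)*g = c*(g*g) := by group
              _ = (g*c)*g := e2),
          if_neg (fun e : (p*g)*(p*g*c) = p*(g*(c*g)) => by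
            apply hii
            refine mul_right_cancel (b := g) ?_
            calc (c*(p*g))*g = ((c*p)*g)*g := by group
              _ = ((p*c)*g)*g := by rw [← hpc]
              _ = p*(c*(g*g)) := by group
              _ = p*((g*g)*c) := by rw [← hg2c]
              _ = p*(((p*g)*(p*g))*c) := by rw [← hpgpg]
              _ = p*((p*g)*(p*g*c)) := by group
              _ = p*(p*(g*(c*g))) := by rw [e]
              _ = (p*p)*(g*(c*g)) := by group
              _ = g*(c*g) := by rw [hP2, one_mul]
              _ = (g*c)*g := by group),
          if_neg (fun e : (p*g*c)*(p*g) = p*(g*(c*g)) =>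
            hPn (mul_eq_right.mp (hc8pos.symm.trans e).symm))] at E2
      rw [map_mul, Units.val_mul] at E2
      have eq2 : ((σ c : Rˣ):R) * ((σ g : Rˣ):R) + ((σ g : Rˣ):R) = 0 := by
        linear_combination -E2
      have hw : ((σ c : Rˣ):R) = -1 := by
        have h3 : ((σ g : Rˣ):R) * (((σ c : Rˣ):R) + 1) = 0 := by linear_combination eq2
        have h4 := hcancel (σ g) _ h3
        linear_combination h4
      -- third evaluation
      have E3 := E c g (c*g)
      rw [hc, hinvg] at E3
      rw [if_pos (rfl : c*g = c*g),
          if_neg (fun e : g*c = c*g => hne e.symm),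
          if_neg (fun e : c*(p*g) = c*g => hPn (mul_eq_right.mp (mul_left_cancel e))),
          if_neg (fun e : (p*g)*c = c*g => hi e)] at E3
      rw [if_pos (rfl : c*g = c*g),
          if_neg (fun e : g*c = c*g => hne e.symm),
          if_neg (fun e : c*(p*g) = c*g => hPn (mul_eq_right.mp (mul_left_cancel e))),
          if_neg (fun e : (p*g)*c = c*g => hi e)] at E3
      have h20 : (2:R) = 0 := by linear_combination E3 + hw
      exact htwo h20

  -- solve helper
  have hsolve : ∀ a b x y : G, a*a = 1 → b*b = 1 → (b*a)*x = y → x = a*(b*y) := by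
    intro a b x y ha hb e
    have h0 : a*(b*((b*a)*x)) = x := by
      calc a*(b*((b*a)*x)) = a*((b*b)*(a*x)) := by group
        _ = a*(a*x) := by rw [hb, one_mul]
        _ = (a*a)*x := by group
        _ = x := by rw [ha, one_mul]
    rw [← e]
    exact h0.symm
  by_cases habel : ∀ a b : G, a * b = b * a
  · exact Or.inl habel
  · -- nonabelian branch
    have hnab := habel
    -- L4 : central elements are fixed
    have L4 : ∀ z : G, (∀ t : G, t * z = z * t) → inv z = z := by
      intro z hz
      by_contra hzf
      obtain ⟨hinvz, hZ2, hZf, hZn, hZc⟩ := Pfacts z hzf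
      set q0 := inv z * z⁻¹ with hq0def
      have hpzc : ∀ t : G, q0 * t = t * q0 := fun t => L3 q0 t hZf
      have key : ∀ g : G, inv g ≠ g → inv g * g⁻¹ = q0 := by
        intro g hg
        by_contra hpq
        obtain ⟨hinvg, hq2, hqf, hqn, hqcg⟩ := Pfacts g hg
        set q := inv g * g⁻¹ with hqdef
        have hqcen : ∀ t : G, q * t = t * q := fun t => L3 q t hqf
        have hq0q : q0 * q ≠ 1 := by
          intro e
          apply hpq
          have h1 : q = q0⁻¹ := eq_inv_of_mul_eq_one_right e
          rw [h1, inv_eq_of_mul_eq_one_right hZ2]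
        have E4 := E z g (z*g)
        rw [hinvz, hinvg] at E4
        rw [if_pos (rfl : z*g = z*g),
            if_pos (hz g : g*z = z*g),
            if_neg (fun e : z*(q*g) = z*g => hqn (mul_eq_right.mp (mul_left_cancel e))),
            if_neg (fun e : (q*g)*z = z*g => hqn (mul_eq_right.mp (by
              calc q*(z*g) = q*(g*z) := by rw [← hz g]
                _ = (q*g)*z := by group
                _ = z*g := e))),
            if_neg (fun e : (q0*z)*g = z*g => hZn (mul_eq_right.mp (by
              calc q0*(z*g) = (q0*z)*g := by group
                _ = z*g := e))),
            if_neg (fun e : g*(q0*z) = z*g => hZn (mul_eq_right.mp (by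
              calc q0*(z*g) = q0*(g*z) := by rw [← hz g]
                _ = (q0*g)*z := by group
                _ = (g*q0)*z := by rw [hpzc g]
                _ = g*(q0*z) := by group
                _ = z*g := e))),
            if_neg (fun e : (q0*z)*(q*g) = z*g => hq0q (mul_eq_right.mp (by
              calc (q0*q)*(z*g) = q0*((q*z)*g) := by group
                _ = q0*((z*q)*g) := by rw [hqcen z]
                _ = (q0*z)*(q*g) := by group
                _ = z*g := e))),
            if_neg (fun e : (q*g)*(q0*z) = z*g => hq0q (mul_eq_right.mp (by
              calc (q0*q)*(z*g) = (q*q0)*(z*g) := by rw [hpzc q]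
                _ = (q*q0)*(g*z) := by rw [← hz g]
                _ = q*((q0*g)*z) := by group
                _ = q*((g*q0)*z) := by rw [hpzc g]
                _ = (q*g)*(q0*z) := by group
                _ = z*g := e)))] at E4
        exact htwo (by linear_combination E4)
      -- now show G abelian, contradiction
      apply hnab
      have central : ∀ g : G, inv g ≠ g → ∀ t : G, g * t = t * g := by
        intro g hg t
        obtain ⟨hinvg0, _, _, _, _⟩ := Pfacts g hg
        have hinvg' : inv g = q0 * g := by rw [hinvg0, key g hg]
        have hf : inv (g*z) = g*z := by
          rw [hmul, hinvz, hinvg']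
          calc (q0*z)*(q0*g) = q0*((z*q0)*g) := by group
            _ = q0*((q0*z)*g) := by rw [← hpzc z]
            _ = (q0*q0)*(z*g) := by group
            _ = z*g := by rw [hZ2, one_mul]
            _ = g*z := (hz g).symm
        have h1 : (g*z) * t = t * (g*z) := L3 (g*z) t hf
        refine mul_right_cancel (b := z) ?_
        calc (g*t)*z = g*(t*z) := by group
          _ = g*(z*t) := by rw [hz t]
          _ = (g*z)*t := by group
          _ = t*(g*z) := h1
          _ = (t*g)*z := by group
      intro a b
      by_cases ha : inv a = a
      · exact L3 a b ha
      · exact central a ha b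
    -- L5a : noncommuting elements have the same p
    have L5a : ∀ g h : G, g*h ≠ h*g → inv g * g⁻¹ = inv h * h⁻¹ := by
      intro g h hne
      have hg : inv g ≠ g := fun e => hne (L3 g h e)
      have hh : inv h ≠ h := fun e => hne (L3 h g e).symm
      obtain ⟨hinvg, hp2, hpf, hpn, _⟩ := Pfacts g hg
      obtain ⟨hinvh, hq2, hqf, hqn, _⟩ := Pfacts h hh
      set p := inv g * g⁻¹ with hpdef
      set q := inv h * h⁻¹ with hqdef
      have hpc : ∀ t : G, p * t = t * p := fun t => L3 p t hpf
      have hqc : ∀ t : G, q * t = t * q := fun t => L3 q t hqf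
      by_contra hpq
      have hpqne1 : p * q ≠ 1 := fun e =>
        hpq ((eq_inv_of_mul_eq_one_left e).trans (inv_eq_of_mul_eq_one_right hq2))
      have hqpne1 : q * p ≠ 1 := fun e => hpqne1 ((hqc p).symm.trans e)
      by_cases hdpq : h*g = p*(q*(g*h))
      · have hf : inv (g*h) = g*h := by
          rw [hmul, hinvg, hinvh]
          calc (q*h)*(p*g) = q*((h*p)*g) := by group
            _ = q*((p*h)*g) := by rw [← hpc h]
            _ = (q*p)*(h*g) := by group
            _ = (q*p)*(p*(q*(g*h))) := by rw [hdpq]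
            _ = q*((p*p)*(q*(g*h))) := by group
            _ = q*(q*(g*h)) := by rw [hp2, one_mul]
            _ = (q*q)*(g*h) := by group
            _ = g*h := by rw [hq2, one_mul]
        have h1 := L3 (g*h) g hf
        apply hne
        have h2 : g*(h*g) = g*(g*h) := by
          calc g*(h*g) = (g*h)*g := by group
            _ = g*(g*h) := h1
        exact (mul_left_cancel h2).symm
      · by_cases hdp : h*g = p*(g*h)
        · -- case d = p : derive σ g = 1 then contradiction
          have hc8id : (q*h)*(p*g) = q*(g*h) := by
            calc (q*h)*(p*g) = q*((h*p)*g) := by group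
              _ = q*((p*h)*g) := by rw [← hpc h]
              _ = (q*p)*(h*g) := by group
              _ = (q*p)*(p*(g*h)) := by rw [hdp]
              _ = q*((p*p)*(g*h)) := by group
              _ = q*(g*h) := by rw [hp2, one_mul]
          have E4 := E g h (g*h)
          rw [hinvg, hinvh] at E4
          rw [if_pos (rfl : g*h = g*h),
              if_neg (fun e : h*g = g*h => hne e.symm),
              if_neg (fun e : g*(q*h) = g*h => hqn (mul_eq_right.mp (mul_left_cancel e))),
              if_neg (fun e : (q*h)*g = g*h => hqpne1 (mul_eq_right.mp (by
                calc (q*p)*(g*h) = q*(p*(g*h)) := by group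
                  _ = q*(h*g) := by rw [← hdp]
                  _ = (q*h)*g := by group
                  _ = g*h := e))),
              if_neg (fun e : (p*g)*h = g*h => hpn (mul_eq_right.mp (by
                calc p*(g*h) = (p*g)*h := by group
                  _ = g*h := e))),
              if_pos (show h*(p*g) = g*h by
                calc h*(p*g) = (h*p)*g := by group
                  _ = (p*h)*g := by rw [← hpc h]
                  _ = p*(h*g) := by group
                  _ = p*(p*(g*h)) := by rw [hdp]
                  _ = (p*p)*(g*h) := by group
                  _ = g*h := by rw [hp2, one_mul]),
              if_neg (fun e : (p*g)*(q*h) = g*h => hpqne1 (mul_eq_right.mp (by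
                calc (p*q)*(g*h) = p*((q*g)*h) := by group
                  _ = p*((g*q)*h) := by rw [hqc g]
                  _ = (p*g)*(q*h) := by group
                  _ = g*h := e))),
              if_neg (fun e : (q*h)*(p*g) = g*h =>
                hqn (mul_eq_right.mp (hc8id.symm.trans e)))] at E4
          have hu1 : ((σ g : Rˣ):R) = 1 := by linear_combination -E4
          have hinvgh : inv (g*h) = q*(g*h) := by
            rw [hmul, hinvg, hinvh]; exact hc8id
          have E5 := E h (g*h) (q*(h*(g*h)))
          rw [hinvh, hinvgh] at E5
          rw [if_neg (fun e : h*(g*h) = q*(h*(g*h)) => hqn (mul_eq_right.mp e.symm)),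
              if_neg (fun e : (g*h)*h = q*(h*(g*h)) => hqpne1 (mul_eq_right.mp (by
                calc (q*p)*((g*h)*h) = q*((p*(g*h))*h) := by group
                  _ = q*((h*g)*h) := by rw [← hdp]
                  _ = q*(h*(g*h)) := by group
                  _ = (g*h)*h := e.symm))),
              if_pos (show h*(q*(g*h)) = q*(h*(g*h)) by
                calc h*(q*(g*h)) = (h*q)*(g*h) := by group
                  _ = (q*h)*(g*h) := by rw [← hqc h]
                  _ = q*(h*(g*h)) := by group),
              if_neg (fun e : (q*(g*h))*h = q*(h*(g*h)) => by
                apply hne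
                have e2 := mul_left_cancel (show q*((g*h)*h) = q*(h*(g*h)) by
                  calc q*((g*h)*h) = (q*(g*h))*h := by group
                    _ = q*(h*(g*h)) := e)
                exact mul_right_cancel (e2.trans (show h*(g*h) = (h*g)*h by group))),
              if_pos (show (q*h)*(g*h) = q*(h*(g*h)) by group),
              if_neg (fun e : (g*h)*(q*h) = q*(h*(g*h)) => by
                apply hne
                have e2 := mul_left_cancel (show q*((g*h)*h) = q*(h*(g*h)) by
                  calc q*((g*h)*h) = (q*(g*h))*h := by group
                    _ = ((g*h)*q)*h := by rw [hqc (g*h)]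
                    _ = (g*h)*(q*h) := by group
                    _ = q*(h*(g*h)) := e)
                exact mul_right_cancel (e2.trans (show h*(g*h) = (h*g)*h by group))),
              if_neg (fun e : (q*h)*(q*(g*h)) = q*(h*(g*h)) => hqn (mul_eq_right.mp
                ((e.symm).trans (by
                  calc (q*h)*(q*(g*h)) = q*((h*q)*(g*h)) := by group
                    _ = q*((q*h)*(g*h)) := by rw [← hqc h]
                    _ = (q*q)*(h*(g*h)) := by group
                    _ = h*(g*h) := by rw [hq2, one_mul])))),
              if_neg (fun e : (q*(g*h))*(q*h) = q*(h*(g*h)) => by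
                have lhsid : (q*(g*h))*(q*h) = (g*h)*h := by
                  calc (q*(g*h))*(q*h) = q*(((g*h)*q)*h) := by group
                    _ = q*((q*(g*h))*h) := by rw [← hqc (g*h)]
                    _ = (q*q)*((g*h)*h) := by group
                    _ = (g*h)*h := by rw [hq2, one_mul]
                apply hqpne1
                have e3 : (q*p)*((g*h)*h) = (g*h)*h := by
                  calc (q*p)*((g*h)*h) = q*((p*(g*h))*h) := by group
                    _ = q*((h*g)*h) := by rw [← hdp]
                    _ = q*(h*(g*h)) := by group
                    _ = (g*h)*h := (e.symm.trans lhsid)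
                exact mul_eq_right.mp e3)] at E5
          rw [map_mul, Units.val_mul] at E5
          have h2 : (2:R)*((σ h : Rˣ):R) = 0 := by linear_combination -E5 - ((σ h : Rˣ):R)*hu1
          exact htwo (hcancel (σ h) 2 (by rw [mul_comm]; exact h2))
        · by_cases hdq : h*g = q*(g*h)
          · have hdq' : g*h = q*(h*g) := by
              calc g*h = (q*q)*(g*h) := by rw [hq2, one_mul]
                _ = q*(q*(g*h)) := by group
                _ = q*(h*g) := by rw [← hdq]
            have id8 : (q*h)*(p*g) = p*(g*h) := by
              calc (q*h)*(p*g) = q*((h*p)*g) := by group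
                _ = q*((p*h)*g) := by rw [← hpc h]
                _ = (q*p)*(h*g) := by group
                _ = (q*p)*(q*(g*h)) := by rw [hdq]
                _ = q*((p*q)*(g*h)) := by group
                _ = q*((q*p)*(g*h)) := by rw [← hqc p]
                _ = (q*q)*(p*(g*h)) := by group
                _ = p*(g*h) := by rw [hq2, one_mul]
            have E6 := E g h (g*h)
            rw [hinvg, hinvh] at E6
            rw [if_pos (rfl : g*h = g*h),
                if_neg (fun e : h*g = g*h => hne e.symm),
                if_neg (fun e : g*(q*h) = g*h => hqn (mul_eq_right.mp (mul_left_cancel e))),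
                if_pos (show (q*h)*g = g*h by
                  calc (q*h)*g = q*(h*g) := by group
                    _ = q*(q*(g*h)) := by rw [hdq]
                    _ = (q*q)*(g*h) := by group
                    _ = g*h := by rw [hq2, one_mul]),
                if_neg (fun e : (p*g)*h = g*h => hpn (mul_eq_right.mp (by
                  calc p*(g*h) = (p*g)*h := by group
                    _ = g*h := e))),
                if_neg (fun e : h*(p*g) = g*h => hpqne1 (mul_eq_right.mp (by
                  calc (p*q)*(g*h) = p*(q*(g*h)) := by group
                    _ = p*(h*g) := by rw [← hdq]
                    _ = (p*h)*g := by group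
                    _ = (h*p)*g := by rw [hpc h]
                    _ = h*(p*g) := by group
                    _ = g*h := e))),
                if_neg (fun e : (p*g)*(q*h) = g*h => hpqne1 (mul_eq_right.mp (by
                  calc (p*q)*(g*h) = p*((q*g)*h) := by group
                    _ = p*((g*q)*h) := by rw [hqc g]
                    _ = (p*g)*(q*h) := by group
                    _ = g*h := e))),
                if_neg (fun e : (q*h)*(p*g) = g*h =>
                  hpn (mul_eq_right.mp (id8.symm.trans e)))] at E6
            have hv1 : ((σ h : Rˣ):R) = 1 := by linear_combination -E6
            have hinvhg : inv (h*g) = p*(h*g) := by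
              rw [hmul, hinvg, hinvh]
              calc (p*g)*(q*h) = p*((g*q)*h) := by group
                _ = p*((q*g)*h) := by rw [← hqc g]
                _ = (p*q)*(g*h) := by group
                _ = (p*q)*(q*(h*g)) := by rw [hdq']
                _ = p*((q*q)*(h*g)) := by group
                _ = p*(h*g) := by rw [hq2, one_mul]
            have E7 := E g (h*g) (p*(g*(h*g)))
            rw [hinvg, hinvhg] at E7
            rw [if_neg (fun e : g*(h*g) = p*(g*(h*g)) => hpn (mul_eq_right.mp e.symm)),
                if_neg (fun e : (h*g)*g = p*(g*(h*g)) => hpqne1 (mul_eq_right.mp (by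
                  calc (p*q)*((h*g)*g) = p*((q*(h*g))*g) := by group
                    _ = p*((g*h)*g) := by rw [← hdq']
                    _ = p*(g*(h*g)) := by group
                    _ = (h*g)*g := e.symm))),
                if_pos (show g*(p*(h*g)) = p*(g*(h*g)) by
                  calc g*(p*(h*g)) = (g*p)*(h*g) := by group
                    _ = (p*g)*(h*g) := by rw [← hpc g]
                    _ = p*(g*(h*g)) := by group),
                if_neg (fun e : (p*(h*g))*g = p*(g*(h*g)) => by
                  apply hne
                  have e2 := mul_left_cancel (show p*((h*g)*g) = p*(g*(h*g)) by
                    calc p*((h*g)*g) = (p*(h*g))*g := by group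
                      _ = p*(g*(h*g)) := e)
                  exact (mul_right_cancel (e2.trans (show g*(h*g) = (g*h)*g by group))).symm),
                if_pos (show (p*g)*(h*g) = p*(g*(h*g)) by group),
                if_neg (fun e : (h*g)*(p*g) = p*(g*(h*g)) => by
                  apply hne
                  have e2 := mul_left_cancel (show p*((h*g)*g) = p*(g*(h*g)) by
                    calc p*((h*g)*g) = (p*(h*g))*g := by group
                      _ = ((h*g)*p)*g := by rw [hpc (h*g)]
                      _ = (h*g)*(p*g) := by group
                      _ = p*(g*(h*g)) := e)
                  exact (mul_right_cancel (e2.trans (show g*(h*g) = (g*h)*g by group))).symm),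
                if_neg (fun e : (p*g)*(p*(h*g)) = p*(g*(h*g)) => by
                  have idc7 : (p*g)*(p*(h*g)) = g*(h*g) := by
                    calc (p*g)*(p*(h*g)) = p*((g*p)*(h*g)) := by group
                      _ = p*((p*g)*(h*g)) := by rw [hpc g]
                      _ = (p*p)*(g*(h*g)) := by group
                      _ = g*(h*g) := by rw [hp2, one_mul]
                  exact hpn (mul_eq_right.mp (idc7.symm.trans e).symm)),
                if_neg (fun e : (p*(h*g))*(p*g) = p*(g*(h*g)) => by
                  have idc8 : (p*(h*g))*(p*g) = (h*g)*g := by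
                    calc (p*(h*g))*(p*g) = p*(((h*g)*p)*g) := by group
                      _ = p*((p*(h*g))*g) := by rw [← hpc (h*g)]
                      _ = (p*p)*((h*g)*g) := by group
                      _ = (h*g)*g := by rw [hp2, one_mul]
                  apply hpqne1
                  have e3 : (p*q)*((h*g)*g) = (h*g)*g := by
                    calc (p*q)*((h*g)*g) = p*((q*(h*g))*g) := by group
                      _ = p*((g*h)*g) := by rw [← hdq']
                      _ = p*(g*(h*g)) := by group
                      _ = (h*g)*g := (idc8.symm.trans e).symm
                  exact mul_eq_right.mp e3)] at E7
            rw [map_mul, Units.val_mul] at E7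
            have h2 : (2:R)*((σ g : Rˣ):R) = 0 := by linear_combination -E7 - ((σ g : Rˣ):R)*hv1
            exact htwo (hcancel (σ g) 2 (by rw [mul_comm]; exact h2))
          · have E8 := E g h (g*h)
            rw [hinvg, hinvh] at E8
            rw [if_pos (rfl : g*h = g*h),
                if_neg (fun e : h*g = g*h => hne e.symm),
                if_neg (fun e : g*(q*h) = g*h => hqn (mul_eq_right.mp (mul_left_cancel e))),
                if_neg (fun e : (q*h)*g = g*h => hdq (by
                  calc h*g = (q*q)*(h*g) := by rw [hq2, one_mul]
                    _ = q*((q*h)*g) := by group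
                    _ = q*(g*h) := by rw [e])),
                if_neg (fun e : (p*g)*h = g*h => hpn (mul_eq_right.mp (by
                  calc p*(g*h) = (p*g)*h := by group
                    _ = g*h := e))),
                if_neg (fun e : h*(p*g) = g*h => hdp (by
                  have id6 : h*(p*g) = p*(h*g) := by
                    calc h*(p*g) = (h*p)*g := by group
                      _ = (p*h)*g := by rw [← hpc h]
                      _ = p*(h*g) := by group
                  calc h*g = (p*p)*(h*g) := by rw [hp2, one_mul]
                    _ = p*(p*(h*g)) := by group
                    _ = p*(h*(p*g)) := by rw [← id6]
                    _ = p*(g*h) := by rw [e])),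
                if_neg (fun e : (p*g)*(q*h) = g*h => hpqne1 (mul_eq_right.mp (by
                  calc (p*q)*(g*h) = p*((q*g)*h) := by group
                    _ = p*((g*q)*h) := by rw [hqc g]
                    _ = (p*g)*(q*h) := by group
                    _ = g*h := e))),
                if_neg (fun e : (q*h)*(p*g) = g*h => hdpq (by
                  have id8b : (q*h)*(p*g) = (q*p)*(h*g) := by
                    calc (q*h)*(p*g) = q*((h*p)*g) := by group
                      _ = q*((p*h)*g) := by rw [← hpc h]
                      _ = (q*p)*(h*g) := by group
                  exact hsolve p q (h*g) (g*h) hp2 hq2 (id8b.symm.trans e)))] at E8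
            exact hone (by linear_combination E8)
    -- L5b
    have L5b : ∀ g h : G, g*h ≠ h*g → h*g = (inv g * g⁻¹)*(g*h) := by
      intro g h hne
      have hg : inv g ≠ g := fun e => hne (L3 g h e)
      have hh : inv h ≠ h := fun e => hne (L3 h g e).symm
      obtain ⟨hinvg, hp2, hpf, hpn, _⟩ := Pfacts g hg
      obtain ⟨hinvh, _, _, _, _⟩ := Pfacts h hh
      set p := inv g * g⁻¹ with hpdef
      have hpeq := L5a g h hne
      have hinvh' : inv h = p*h := by rw [hinvh, ← hpeq]
      have hpc : ∀ t : G, p*t = t*p := fun t => L3 p t hpf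
      have hf : inv (g*h) = h*g := by
        rw [hmul, hinvg, hinvh']
        calc (p*h)*(p*g) = p*((h*p)*g) := by group
          _ = p*((p*h)*g) := by rw [← hpc h]
          _ = (p*p)*(h*g) := by group
          _ = h*g := by rw [hp2, one_mul]
      have hnc : g*(g*h) ≠ (g*h)*g := by
        intro e
        exact hne (mul_left_cancel (e.trans (show (g*h)*g = g*(h*g) by group)))
      have h2 := L5a g (g*h) hnc
      rw [hf] at h2
      calc h*g = ((h*g)*(g*h)⁻¹)*(g*h) := by group
        _ = p*(g*h) := by rw [← h2]
    -- L6
    have L6 : ∀ g h : G, inv g ≠ g → inv h ≠ h → inv g * g⁻¹ = inv h * h⁻¹ := by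
      intro g h hg hh
      by_cases hcomm : g*h = h*g
      · obtain ⟨w, hw⟩ : ∃ w : G, ¬ (g*w = w*g) := by
          by_contra hall
          push_neg at hall
          exact hg (L4 g (fun t => (hall t).symm))
        have hpwg := L5a g w hw
        by_cases hwh : w*h = h*w
        · have hwne : inv w ≠ w := fun e => hw ((L3 w g e).symm)
          obtain ⟨hinvw, hw2, hwf, hwn, _⟩ := Pfacts w hwne
          obtain ⟨hinvh, hh2, hhf, hhn, _⟩ := Pfacts h hh
          set pw := inv w * w⁻¹ with hpwdef
          set ph := inv h * h⁻¹ with hphdef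
          have hphc : ∀ t : G, ph*t = t*ph := fun t => L3 ph t hhf
          have hinvy : inv (h*w) = (pw*ph)*(h*w) := by
            rw [hmul, hinvw, hinvh]
            calc (pw*w)*(ph*h) = pw*((w*ph)*h) := by group
              _ = pw*((ph*w)*h) := by rw [← hphc w]
              _ = (pw*ph)*(w*h) := by group
              _ = (pw*ph)*(h*w) := by rw [hwh]
          by_cases h1 : pw*ph = 1
          · have h3 : ph = pw := by
              have h2' : ph = pw⁻¹ := eq_inv_of_mul_eq_one_right h1
              rw [h2', inv_eq_of_mul_eq_one_right hw2]
            rw [hpwg, ← h3]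
          · have hyg : g*(h*w) ≠ (h*w)*g := by
              intro e
              apply hw
              have e2 : h*(g*w) = h*(w*g) := by
                calc h*(g*w) = (h*g)*w := by group
                  _ = (g*h)*w := by rw [← hcomm]
                  _ = g*(h*w) := by group
                  _ = (h*w)*g := e
                  _ = h*(w*g) := by group
              exact mul_left_cancel e2
            have h3 := L5a g (h*w) hyg
            have h4 : inv (h*w) * (h*w)⁻¹ = pw*ph := by
              rw [hinvy]
              exact mul_inv_cancel_right _ _
            have h5 : pw = pw*ph := hpwg.symm.trans (h3.trans h4)
            exact absurd (mul_eq_left.mp h5.symm) hhn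
        · exact hpwg.trans (L5a w h hwh)
      · exact L5a g h hcomm
    -- assembly
    push_neg at habel
    obtain ⟨a0, b0, hab⟩ := habel
    have hanf : inv a0 ≠ a0 := fun e => hab (L3 a0 b0 e)
    obtain ⟨hinva, hs2, hsf, hsn, _⟩ := Pfacts a0 hanf
    set s := inv a0 * a0⁻¹ with hsdef
    have hsall : ∀ x : G, inv x ≠ x → inv x * x⁻¹ = s := fun x hx => L6 x a0 hx hanf
    have hscen : ∀ t : G, s*t = t*s := fun t => L3 s t hsf
    have hncf : ∀ x : G, x ∉ Subgroup.center G → inv x ≠ x := by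
      intro x hx e
      exact hx (Subgroup.mem_center_iff.mpr (fun t => (L3 x t e).symm))
    have hcf : ∀ x : G, x ∈ Subgroup.center G → inv x = x := by
      intro x hx
      exact L4 x (fun t => Subgroup.mem_center_iff.mp hx t)
    have hnoncen : ∀ x : G, x ∉ Subgroup.center G → inv x = s*x := by
      intro x hx
      have hxf := hncf x hx
      obtain ⟨hinvx, _, _, _, _⟩ := Pfacts x hxf
      rw [hinvx, hsall x hxf]
    have hs_inv : s⁻¹ = s := inv_eq_of_mul_eq_one_right hs2
    refine Or.inr ⟨hnab, ?_, s, hsn, ?_, hcf, hnoncen⟩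
    · intro x y hxy
      by_cases hx : x ∈ Subgroup.center G
      · exact Or.inl hx
      by_cases hy : y ∈ Subgroup.center G
      · exact Or.inr (Or.inl hy)
      refine Or.inr (Or.inr ?_)
      have hfixxy : inv (x*y) = x*y := by
        rw [hmul, hnoncen y hy, hnoncen x hx]
        calc (s*y)*(s*x) = s*((y*s)*x) := by group
          _ = s*((s*y)*x) := by rw [← hscen y]
          _ = (s*s)*(y*x) := by group
          _ = y*x := by rw [hs2, one_mul]
          _ = x*y := hxy.symm
      exact Subgroup.mem_center_iff.mpr (fun t => (L3 (x*y) t hfixxy).symm)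
    · have hcomm_mem : ∀ x y : G, ⁅x, y⁆ ∈ ({1, s} : Set G) := by
        intro x y
        simp only [Set.mem_insert_iff, Set.mem_singleton_iff]
        by_cases hxy : x*y = y*x
        · exact Or.inl (commutatorElement_eq_one_iff_commute.mpr hxy)
        · refine Or.inr ?_
          have hyne : y*x ≠ x*y := fun e => hxy e.symm
          have hyf : inv y ≠ y := fun e => hyne (L3 y x e)
          have h5 := L5b y x hyne
          rw [hsall y hyf] at h5
          rw [commutatorElement_def, h5]
          group
      let K : Subgroup G :=
        { carrier := {1, s}
          one_mem' := Or.inl rfl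
          mul_mem' := by
            rintro x' y' (rfl | rfl) (rfl | rfl) <;> simp [hs2]
          inv_mem' := by
            rintro x' (rfl | rfl) <;> simp [hs_inv] }
      refine Set.Subset.antisymm ?_ ?_
      · intro x hx
        have hK : commutator G ≤ K := by
          rw [commutator_def]
          exact Subgroup.commutator_le.mpr (fun g1 _ g2 _ => hcomm_mem g1 g2)
        exact hK hx
      · rintro x (rfl | rfl)
        · exact Subgroup.one_mem _
        · have h5 := L5b a0 b0 hab
          rw [hsall a0 hanf] at h5
          have h6 : ⁅b0, a0⁆ = s := by
            rw [commutatorElement_def, h5]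
            group
          have h7 : ⁅b0, a0⁆ ∈ commutator G := by
            rw [commutator_def]
            exact Subgroup.commutator_mem_commutator (Subgroup.mem_top b0) (Subgroup.mem_top a0)
          rw [← h6]
          exact h7
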